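/- Let n ≥ 2 be an even integer and m = n + 2. Consider the column sums c_{2l−1} = c_{2l} = n − 2(l−1) for l = 1,…,n/2 (i.e. the sequence (n, n, n−2, n−2, …, 4, 4, 2, 2)) and the row sums r_1 = n, r_{2l} = r_{2l+1} = n − 2l + 1 for l = 1,…,n/2, and r_m = 0 (i.e. the sequence (n, n−1, n−1, n−3, n−3, …, 3, 3, 1, 1, 0)). Then: (a) every binary image F ⊆ {1,…,m} × {1,…,n} with these row and column sums has horizontal boundary of length L_h ≥ 3n; and (b) there exists such a binary image F with L_h = 3n. -/

import Mathlib

/-- The row sum `r i` of a binary image `F`: the number of points of `F` in row `i`. -/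
def rowSum (F : Finset (ℤ × ℤ)) (i : ℤ) : ℕ := (F.filter fun p => p.1 = i).card

/-- The column sum `c j` of a binary image `F`: the number of points of `F` in column `j`. -/
def colSum (F : Finset (ℤ × ℤ)) (j : ℤ) : ℕ := (F.filter fun p => p.2 = j).card

/-- The length of the horizontal boundary of `F`: the number of pairs
`((i,j),(i',j'))` with `j = j'`, `|i - i'| = 1`, `(i,j) ∈ F` and `(i',j') ∉ F`. -/
noncomputable def horizBoundaryLen (F : Finset (ℤ × ℤ)) : ℕ :=
  Set.ncard {q : (ℤ × ℤ) × (ℤ × ℤ) |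
    q.1.2 = q.2.2 ∧ |q.1.1 - q.2.1| = 1 ∧ q.1 ∈ F ∧ q.2 ∉ F}

/-- `F ⊆ {1,…,m} × {1,…,n}` has the line sums of Example 3:
column sums `(n, n, n-2, n-2, …, 4, 4, 2, 2)` (i.e. `c_{2l-1} = c_{2l} = n - 2(l-1)`
for `1 ≤ l ≤ n/2`) and row sums `(n, n-1, n-1, n-3, n-3, …, 3, 3, 1, 1, 0)`
(i.e. `r_1 = n`, `r_{2l} = r_{2l+1} = n - 2l + 1` for `1 ≤ l ≤ n/2`, `r_m = 0`). -/
def example3Image (m n : ℕ) (F : Finset (ℤ × ℤ)) : Prop :=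
  (∀ p ∈ F, p.1 ∈ Finset.Icc (1 : ℤ) (m : ℤ) ∧ p.2 ∈ Finset.Icc (1 : ℤ) (n : ℤ)) ∧
  rowSum F 1 = n ∧
  (∀ l : ℤ, 1 ≤ l → 2 * l ≤ (n : ℤ) →
    (rowSum F (2 * l) : ℤ) = (n : ℤ) - 2 * l + 1 ∧
    (rowSum F (2 * l + 1) : ℤ) = (n : ℤ) - 2 * l + 1) ∧
  rowSum F (m : ℤ) = 0 ∧
  (∀ l : ℤ, 1 ≤ l → 2 * l ≤ (n : ℤ) →
    (colSum F (2 * l - 1) : ℤ) = (n : ℤ) - 2 * (l - 1) ∧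
    (colSum F (2 * l) : ℤ) = (n : ℤ) - 2 * (l - 1))

namespace Ex3

def Rows (F : Finset (ℤ × ℤ)) (j : ℤ) : Finset ℤ := (F.filter fun p => p.2 = j).image Prod.fst
def Cols (F : Finset (ℤ × ℤ)) (i : ℤ) : Finset ℤ := (F.filter fun p => p.1 = i).image Prod.snd

lemma mem_Rows {F : Finset (ℤ × ℤ)} {j i : ℤ} : i ∈ Rows F j ↔ (i, j) ∈ F := by
  simp only [Rows, Finset.mem_image, Finset.mem_filter]
  constructor
  · rintro ⟨p, ⟨hp, h2⟩, h1⟩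
    rwa [show (i, j) = p by exact Prod.ext h1.symm h2.symm]
  · intro h; exact ⟨(i, j), ⟨h, rfl⟩, rfl⟩

lemma mem_Cols {F : Finset (ℤ × ℤ)} {i j : ℤ} : j ∈ Cols F i ↔ (i, j) ∈ F := by
  simp only [Cols, Finset.mem_image, Finset.mem_filter]
  constructor
  · rintro ⟨p, ⟨hp, h1⟩, h2⟩
    rwa [show (i, j) = p by exact Prod.ext h1.symm h2.symm]
  · intro h; exact ⟨(i, j), ⟨h, rfl⟩, rfl⟩

lemma card_Rows (F : Finset (ℤ × ℤ)) (j : ℤ) : (Rows F j).card = colSum F j := by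
  rw [Rows, colSum, Finset.card_image_of_injOn]
  intro p hp q hq h
  simp only [Finset.mem_coe, Finset.mem_filter] at hp hq
  exact Prod.ext h (hp.2.trans hq.2.symm)

lemma card_Cols (F : Finset (ℤ × ℤ)) (i : ℤ) : (Cols F i).card = rowSum F i := by
  rw [Cols, rowSum, Finset.card_image_of_injOn]
  intro p hp q hq h
  simp only [Finset.mem_coe, Finset.mem_filter] at hp hq
  exact Prod.ext (hp.2.trans hq.2.symm) h

/-- local boundary contribution of a point -/
def b (F : Finset (ℤ × ℤ)) (p : ℤ × ℤ) : ℕ :=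
  (if (p.1 - 1, p.2) ∈ F then 0 else 1) + (if (p.1 + 1, p.2) ∈ F then 0 else 1)

lemma horizBoundaryLen_eq (F : Finset (ℤ × ℤ)) :
    horizBoundaryLen F = ∑ p ∈ F, b F p := by
  classical
  have hset : {q : (ℤ × ℤ) × (ℤ × ℤ) |
      q.1.2 = q.2.2 ∧ |q.1.1 - q.2.1| = 1 ∧ q.1 ∈ F ∧ q.2 ∉ F}
      = ↑(F.biUnion (fun p => ({(p, (p.1 - 1, p.2)), (p, (p.1 + 1, p.2))} :
          Finset ((ℤ × ℤ) × (ℤ × ℤ))).filter (fun q => q.2 ∉ F))) := by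
    ext ⟨⟨i, j⟩, ⟨i', j'⟩⟩
    simp only [Set.mem_setOf_eq, Finset.coe_biUnion, Set.mem_iUnion, Finset.mem_coe,
      Finset.mem_filter, Finset.mem_insert, Finset.mem_singleton, Prod.mk.injEq]
    constructor
    · rintro ⟨hcol, habs, h1, h2⟩
      refine ⟨(i, j), h1, ?_, h2⟩
      rcases (abs_eq (by norm_num : (0:ℤ) ≤ 1)).mp habs with h | h <;> simp <;> omega
    · rintro ⟨⟨a, c⟩, hp, h, h5⟩
      simp only [Prod.mk.injEq] at h
      obtain ⟨h1, h2, h3, h4⟩ : i = a ∧ j = c ∧ j' = c ∧ (i' = i - 1 ∨ i' = i + 1) := by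
        omega
      subst h1; subst h2; subst h3
      refine ⟨rfl, ?_, hp, h5⟩
      rcases h4 with h4 | h4 <;> rw [h4]
      · rw [show i - (i - 1) = 1 by ring]; norm_num
      · rw [show i - (i + 1) = -1 by ring]; norm_num
  rw [horizBoundaryLen, hset, Set.ncard_coe_finset]
  rw [Finset.card_biUnion]
  · refine Finset.sum_congr rfl fun p hp => ?_
    rw [Finset.filter_insert, Finset.filter_singleton]
    have hne : (p, (p.1 - 1, p.2)) ≠ (p, (p.1 + 1, p.2)) := by
      simp only [ne_eq, Prod.mk.injEq]
      rintro ⟨-, h, -⟩; omega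
    by_cases h1 : (p.1 - 1, p.2) ∈ F <;> by_cases h2 : (p.1 + 1, p.2) ∈ F <;>
      simp [b, h1, h2, hne]
  · intro p hp q hq hpq
    simp only [Finset.disjoint_left, Finset.mem_filter, Finset.mem_insert, Finset.mem_singleton]
    rintro a ⟨h1 | h1, -⟩ ⟨h2 | h2, -⟩ <;> subst h1 <;> simp_all

/-- total contribution of a column whose set of rows is S -/
def w (S : Finset ℤ) : ℕ :=
  ∑ i ∈ S, ((if i - 1 ∈ S then 0 else 1) + (if i + 1 ∈ S then 0 else 1))

lemma sum_col (F : Finset (ℤ × ℤ)) (j : ℤ) :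
    ∑ p ∈ F.filter (fun p => p.2 = j), b F p = w (Rows F j) := by
  classical
  have hinj : ∀ p ∈ F.filter (fun p => p.2 = j), ∀ q ∈ F.filter (fun p => p.2 = j),
      p.1 = q.1 → p = q := by
    intro p hp q hq h
    simp only [Finset.mem_filter] at hp hq
    exact Prod.ext h (hp.2.trans hq.2.symm)
  have h1 : w (Rows F j) = ∑ i ∈ Rows F j,
      ((if (i - 1, j) ∈ F then 0 else 1) + (if (i + 1, j) ∈ F then 0 else 1)) := by
    simp only [w, mem_Rows]
  rw [h1, Rows, Finset.sum_image hinj]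
  refine Finset.sum_congr rfl fun p hp => ?_
  simp [b, (Finset.mem_filter.mp hp).2]

lemma w_Icc (c : ℤ) (hc : 1 ≤ c) : w (Finset.Icc 1 c) = 2 := by
  rw [w]
  have key : ∀ i ∈ Finset.Icc (1:ℤ) c,
      ((if i - 1 ∈ Finset.Icc (1:ℤ) c then 0 else 1) +
        (if i + 1 ∈ Finset.Icc (1:ℤ) c then 0 else 1))
      = ((if i = 1 then 1 else 0) + (if i = c then 1 else 0)) := by
    intro i hi
    simp only [Finset.mem_Icc] at hi ⊢
    split_ifs <;> omega
  rw [Finset.sum_congr rfl key, Finset.sum_add_distrib]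
  rw [Finset.sum_ite_eq' (Finset.Icc (1:ℤ) c) 1 (fun _ => 1),
      Finset.sum_ite_eq' (Finset.Icc (1:ℤ) c) c (fun _ => 1)]
  simp [Finset.mem_Icc, hc]

lemma w_Icc_gap (c : ℤ) (hc : 1 ≤ c) : w (Finset.Icc 1 c ∪ {c + 2}) = 4 := by
  rw [w]
  set S := Finset.Icc (1:ℤ) c ∪ {c + 2} with hS
  have hmem : ∀ x : ℤ, x ∈ S ↔ (1 ≤ x ∧ x ≤ c) ∨ x = c + 2 := by
    intro x; simp [hS, Finset.mem_Icc]; tauto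
  have key : ∀ i ∈ S,
      ((if i - 1 ∈ S then 0 else 1) + (if i + 1 ∈ S then 0 else 1))
      = ((if i = 1 then 1 else 0) + ((if i = c then 1 else 0) + (if i = c + 2 then 2 else 0))) := by
    intro i hi
    rw [hmem] at hi
    rw [show (if i - 1 ∈ S then (0:ℕ) else 1)
        = if (1 ≤ i - 1 ∧ i - 1 ≤ c) ∨ i - 1 = c + 2 then 0 else 1 by simp [hmem]]
    rw [show (if i + 1 ∈ S then (0:ℕ) else 1)
        = if (1 ≤ i + 1 ∧ i + 1 ≤ c) ∨ i + 1 = c + 2 then 0 else 1 by simp [hmem]]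
    split_ifs <;> omega
  rw [Finset.sum_congr rfl key, Finset.sum_add_distrib, Finset.sum_add_distrib]
  rw [Finset.sum_ite_eq' S 1 (fun _ => 1), Finset.sum_ite_eq' S c (fun _ => 1),
      Finset.sum_ite_eq' S (c + 2) (fun _ => 2)]
  have h1 : (1:ℤ) ∈ S := by rw [hmem]; omega
  have h2 : (c:ℤ) ∈ S := by rw [hmem]; omega
  have h3 : (c + 2:ℤ) ∈ S := by rw [hmem]; omega
  rw [if_pos h1, if_pos h2, if_pos h3]
  norm_num

lemma sum_pairs (g : ℤ → ℕ) (k : ℕ) :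
    ∑ j ∈ Finset.Icc (1:ℤ) (2 * k), g j
      = ∑ l ∈ Finset.Icc (1:ℤ) (k:ℤ), (g (2 * l - 1) + g (2 * l)) := by
  induction k with
  | zero => simp
  | succ k ih =>
    have e1 : Finset.Icc (1:ℤ) (2 * ((k:ℤ) + 1)) =
        insert (2 * (k:ℤ) + 2) (insert (2 * (k:ℤ) + 1) (Finset.Icc (1:ℤ) (2 * k))) := by
      ext x
      simp only [Finset.mem_Icc, Finset.mem_insert]
      omega
    have e2 : Finset.Icc (1:ℤ) ((k:ℤ) + 1) = insert ((k:ℤ) + 1) (Finset.Icc (1:ℤ) (k:ℤ)) := by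
      ext x
      simp only [Finset.mem_Icc, Finset.mem_insert]
      omega
    push_cast
    rw [e1, e2,
        Finset.sum_insert (by simp only [Finset.mem_insert, Finset.mem_Icc]; omega),
        Finset.sum_insert (by simp only [Finset.mem_Icc]; omega),
        Finset.sum_insert (by simp only [Finset.mem_Icc]; omega), ih,
        show 2 * ((k:ℤ) + 1) - 1 = 2 * (k:ℤ) + 1 by ring,
        show 2 * ((k:ℤ) + 1) = 2 * (k:ℤ) + 2 by ring]
    omega

end Ex3


namespace Ex3

section Construction

variable (k : ℕ)

/-- the model reconstruction: column `2l-1` is rows `1..n-2l+2`,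
column `2l` is rows `1..n-2l+1` together with `n-2l+3`, where `n = 2k`. -/
noncomputable def F0 (k : ℕ) : Finset (ℤ × ℤ) :=
  (Finset.Icc (1:ℤ) (k:ℤ)).biUnion (fun l =>
    ((Finset.Icc (1:ℤ) (2*(k:ℤ) - 2*l + 2)) ×ˢ {2*l - 1}) ∪
    (((Finset.Icc (1:ℤ) (2*(k:ℤ) - 2*l + 1)) ∪ {2*(k:ℤ) - 2*l + 3}) ×ˢ {2*l}))

lemma mem_F0 {k : ℕ} {p : ℤ × ℤ} : p ∈ F0 k ↔ ∃ l : ℤ, 1 ≤ l ∧ l ≤ (k:ℤ) ∧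
    ((p.2 = 2*l - 1 ∧ 1 ≤ p.1 ∧ p.1 ≤ 2*(k:ℤ) - 2*l + 2) ∨
     (p.2 = 2*l ∧ ((1 ≤ p.1 ∧ p.1 ≤ 2*(k:ℤ) - 2*l + 1) ∨ p.1 = 2*(k:ℤ) - 2*l + 3))) := by
  simp only [F0, Finset.mem_biUnion, Finset.mem_Icc, Finset.mem_union, Finset.mem_product,
    Finset.mem_singleton]
  constructor
  · rintro ⟨l, ⟨h1, h2⟩, h⟩
    exact ⟨l, h1, h2, by tauto⟩
  · rintro ⟨l, h1, h2, h⟩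
    exact ⟨l, ⟨h1, h2⟩, by tauto⟩

lemma Rows_F0_odd {k : ℕ} {l : ℤ} (h1 : 1 ≤ l) (h2 : l ≤ (k:ℤ)) :
    Rows (F0 k) (2*l - 1) = Finset.Icc 1 (2*(k:ℤ) - 2*l + 2) := by
  ext i
  rw [mem_Rows, mem_F0]
  simp only [Finset.mem_Icc]
  constructor
  · rintro ⟨l', hl1, hl2, ⟨he, hi⟩ | ⟨he, hi⟩⟩ <;> omega
  · intro hi
    exact ⟨l, h1, h2, Or.inl ⟨rfl, hi⟩⟩

lemma Rows_F0_even {k : ℕ} {l : ℤ} (h1 : 1 ≤ l) (h2 : l ≤ (k:ℤ)) :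
    Rows (F0 k) (2*l) = Finset.Icc 1 (2*(k:ℤ) - 2*l + 1) ∪ {2*(k:ℤ) - 2*l + 3} := by
  ext i
  rw [mem_Rows, mem_F0]
  simp only [Finset.mem_Icc, Finset.mem_union, Finset.mem_singleton]
  constructor
  · rintro ⟨l', hl1, hl2, ⟨he, hi⟩ | ⟨he, hi⟩⟩ <;> omega
  · intro hi
    exact ⟨l, h1, h2, Or.inr ⟨rfl, by omega⟩⟩

lemma Cols_F0_one {k : ℕ} (hk : 1 ≤ k) : Cols (F0 k) 1 = Finset.Icc 1 (2*(k:ℤ)) := by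
  ext j
  rw [mem_Cols, mem_F0]
  simp only [Finset.mem_Icc]
  constructor
  · rintro ⟨l', hl1, hl2, ⟨he, hi⟩ | ⟨he, hi⟩⟩ <;> omega
  · intro hj
    rcases Int.even_or_odd j with ⟨t, ht⟩ | ⟨t, ht⟩
    · exact ⟨t, by omega, by omega, Or.inr ⟨by omega, by omega⟩⟩
    · exact ⟨t + 1, by omega, by omega, Or.inl ⟨by omega, by omega⟩⟩

lemma Cols_F0_even {k : ℕ} {t : ℤ} (h1 : 1 ≤ t) (h2 : t ≤ (k:ℤ)) :
    Cols (F0 k) (2*t) = Finset.Icc 1 (2*((k:ℤ) - t) + 1) := by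
  ext j
  rw [mem_Cols, mem_F0]
  simp only [Finset.mem_Icc]
  constructor
  · rintro ⟨l', hl1, hl2, ⟨he, hi⟩ | ⟨he, hi⟩⟩ <;> omega
  · intro hj
    rcases Int.even_or_odd j with ⟨s, hs⟩ | ⟨s, hs⟩
    · exact ⟨s, by omega, by omega, Or.inr ⟨by omega, by omega⟩⟩
    · exact ⟨s + 1, by omega, by omega, Or.inl ⟨by omega, by omega⟩⟩

lemma Cols_F0_odd {k : ℕ} {t : ℤ} (h1 : 1 ≤ t) (h2 : t ≤ (k:ℤ)) :
    Cols (F0 k) (2*t + 1) = Finset.Icc 1 (2*((k:ℤ) - t)) ∪ {2*((k:ℤ) - t) + 2} := by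
  ext j
  rw [mem_Cols, mem_F0]
  simp only [Finset.mem_Icc, Finset.mem_union, Finset.mem_singleton]
  constructor
  · rintro ⟨l', hl1, hl2, ⟨he, hi⟩ | ⟨he, hi⟩⟩ <;> omega
  · intro hj
    rcases hj with hj | hj
    · rcases Int.even_or_odd j with ⟨s, hs⟩ | ⟨s, hs⟩
      · exact ⟨s, by omega, by omega, Or.inr ⟨by omega, Or.inl (by omega)⟩⟩
      · exact ⟨s + 1, by omega, by omega, Or.inl ⟨by omega, by omega⟩⟩
    · exact ⟨(k:ℤ) - t + 1, by omega, by omega, Or.inr ⟨by omega, Or.inr (by omega)⟩⟩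

lemma F0_image {k : ℕ} (hk : 1 ≤ k) : example3Image (2*k + 2) (2*k) (F0 k) := by
  have hcardRow : ∀ i : ℤ, (rowSum (F0 k) i : ℤ) = ((Cols (F0 k) i).card : ℤ) := by
    intro i; rw [card_Cols]
  have hcardCol : ∀ j : ℤ, (colSum (F0 k) j : ℤ) = ((Rows (F0 k) j).card : ℤ) := by
    intro j; rw [card_Rows]
  refine ⟨?_, ?_, ?_, ?_, ?_⟩
  · rintro ⟨i, j⟩ hp
    rw [mem_F0] at hp
    obtain ⟨l, h1, h2, h⟩ := hp
    simp only [Finset.mem_Icc]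
    push_cast
    omega
  · have := Cols_F0_one (k := k) hk
    have hcard := card_Cols (F0 k) 1
    rw [this] at hcard
    rw [Int.card_Icc] at hcard
    omega
  · intro l hl1 hl2
    push_cast at hl2
    constructor
    · rw [hcardRow, Cols_F0_even hl1 (by omega), Int.card_Icc]
      omega
    · rw [hcardRow, Cols_F0_odd hl1 (by omega),
        Finset.card_union_of_disjoint (by simp [Finset.disjoint_singleton_right, Finset.mem_Icc]),
        Int.card_Icc, Finset.card_singleton]
      omega
  · rw [rowSum, Finset.card_eq_zero, Finset.filter_eq_empty_iff]
    rintro ⟨i, j⟩ hp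
    rw [mem_F0] at hp
    obtain ⟨l, h1, h2, h⟩ := hp
    simp only
    push_cast
    omega
  · intro l hl1 hl2
    push_cast at hl2
    constructor
    · rw [hcardCol, show 2*l - 1 = 2*l - 1 from rfl, Rows_F0_odd hl1 (by omega), Int.card_Icc]
      omega
    · rw [hcardCol, Rows_F0_even hl1 (by omega),
        Finset.card_union_of_disjoint (by simp [Finset.disjoint_singleton_right, Finset.mem_Icc]),
        Int.card_Icc, Finset.card_singleton]
      omega

end Construction
end Ex3


namespace Ex3

theorem structure_thm (k : ℕ) (hk : 1 ≤ k) (F : Finset (ℤ × ℤ))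
    (H : example3Image (2*k+2) (2*k) F) :
    ∀ l : ℤ, 1 ≤ l → l ≤ (k:ℤ) → ∃ a b : ℤ,
      ((a = 2*l - 1 ∧ b = 2*l) ∨ (a = 2*l ∧ b = 2*l - 1)) ∧
      Rows F a = Finset.Icc 1 (2*(k:ℤ) - 2*l + 2) ∧
      Rows F b = Finset.Icc 1 (2*(k:ℤ) - 2*l + 1) ∪ {2*(k:ℤ) - 2*l + 3} := by
  obtain ⟨Hbox, Hr1, Hrl, Hrm, Hcl⟩ := H
  have hbox : ∀ p ∈ F, 1 ≤ p.1 ∧ p.1 ≤ 2*(k:ℤ) + 2 ∧ 1 ≤ p.2 ∧ p.2 ≤ 2*(k:ℤ) := by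
    intro p hp
    obtain ⟨h1, h2⟩ := Hbox p hp
    simp only [Finset.mem_Icc] at h1 h2
    push_cast at h1 h2
    omega
  have Hrl' : ∀ l0 : ℤ, 1 ≤ l0 → l0 ≤ (k:ℤ) →
      (rowSum F (2*l0) : ℤ) = 2*(k:ℤ) - 2*l0 + 1 ∧
      (rowSum F (2*l0 + 1) : ℤ) = 2*(k:ℤ) - 2*l0 + 1 := by
    intro l0 h1 h2
    have := Hrl l0 h1 (by push_cast; omega)
    push_cast at this
    exact ⟨by omega, by omega⟩
  have Hcl' : ∀ l0 : ℤ, 1 ≤ l0 → l0 ≤ (k:ℤ) →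
      (colSum F (2*l0 - 1) : ℤ) = 2*(k:ℤ) - 2*l0 + 2 ∧
      (colSum F (2*l0) : ℤ) = 2*(k:ℤ) - 2*l0 + 2 := by
    intro l0 h1 h2
    have := Hcl l0 h1 (by push_cast; omega)
    push_cast at this
    exact ⟨by omega, by omega⟩
  have hrm' : rowSum F (2*(k:ℤ) + 2) = 0 := by
    have : ((2*k+2 : ℕ) : ℤ) = 2*(k:ℤ) + 2 := by push_cast; ring
    rwa [this] at Hrm
  have htop : ∀ p ∈ F, p.1 ≤ 2*(k:ℤ) + 1 := by
    intro p hp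
    have h1 := hbox p hp
    by_contra h
    have hp1 : p.1 = 2*(k:ℤ) + 2 := by omega
    have hmem : p ∈ F.filter (fun q => q.1 = 2*(k:ℤ) + 2) := by
      simp [Finset.mem_filter, hp, hp1]
    rw [rowSum, Finset.card_eq_zero] at hrm'
    rw [hrm'] at hmem
    exact absurd hmem (Finset.notMem_empty _)
  have main : ∀ l : ℕ, l ≤ k →
      (∀ p ∈ F, 2*(l:ℤ) < p.2 → p.1 ≤ 2*(k:ℤ) - 2*(l:ℤ) + 1) ∧
      (∀ l' : ℤ, 1 ≤ l' → l' ≤ (l:ℤ) → ∃ a b : ℤ,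
        ((a = 2*l' - 1 ∧ b = 2*l') ∨ (a = 2*l' ∧ b = 2*l' - 1)) ∧
        Rows F a = Finset.Icc 1 (2*(k:ℤ) - 2*l' + 2) ∧
        Rows F b = Finset.Icc 1 (2*(k:ℤ) - 2*l' + 1) ∪ {2*(k:ℤ) - 2*l' + 3}) := by
    intro l
    induction l with
    | zero =>
      intro _
      refine ⟨fun p hp _ => by have := htop p hp; push_cast; omega,
        fun l' h1 h2 => by exfalso; push_cast at h2; omega⟩
    | succ l ih =>
      intro hlk
      obtain ⟨IH1, IH2⟩ := ih (by omega)
      have hfill : ∀ j : ℤ, 1 ≤ j → j ≤ 2*(l:ℤ) → ∀ i : ℤ, 1 ≤ i →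
          i ≤ 2*(k:ℤ) - 2*(l:ℤ) + 1 → (i, j) ∈ F := by
        intro j hj1 hj2 i hi1 hi2
        obtain ⟨l', hl1', hl2', hj⟩ : ∃ l' : ℤ, 1 ≤ l' ∧ l' ≤ (l:ℤ) ∧
            (j = 2*l' - 1 ∨ j = 2*l') := by
          rcases Int.even_or_odd j with ⟨t, ht⟩ | ⟨t, ht⟩
          · exact ⟨t, by omega, by omega, Or.inr (by omega)⟩
          · exact ⟨t + 1, by omega, by omega, Or.inl (by omega)⟩
        obtain ⟨a, b, hab, hRa, hRb⟩ := IH2 l' hl1' hl2'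
        have hja : j = a ∨ j = b := by omega
        rcases hja with rfl | rfl
        · rw [← mem_Rows, hRa, Finset.mem_Icc]; omega
        · rw [← mem_Rows, hRb]
          simp only [Finset.mem_union, Finset.mem_Icc, Finset.mem_singleton]
          omega
      -- the two critical rows
      set i₀ : ℤ := 2*(k:ℤ) - 2*(l:ℤ) with hi₀
      have hi₀2 : 2 ≤ i₀ := by omega
      set C₀ : Finset ℤ := Cols F i₀ with hC₀
      set C₁ : Finset ℤ := Cols F (i₀ + 1) with hC₁
      have hrow := Hrl' ((k:ℤ) - (l:ℤ)) (by omega) (by omega)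
      rw [show 2*((k:ℤ) - (l:ℤ)) = i₀ by omega] at hrow
      have hc0card : C₀.card = 2*l + 1 := by
        rw [hC₀, card_Cols]
        omega
      have hc1card : C₁.card = 2*l + 1 := by
        rw [hC₁, card_Cols]
        omega
      have hsub0 : Finset.Icc (1:ℤ) (2*(l:ℤ)) ⊆ C₀ := by
        intro j hj
        rw [Finset.mem_Icc] at hj
        exact mem_Cols.mpr (hfill j hj.1 hj.2 i₀ (by omega) (by omega))
      have hsub1 : Finset.Icc (1:ℤ) (2*(l:ℤ)) ⊆ C₁ := by
        intro j hj
        rw [Finset.mem_Icc] at hj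
        exact mem_Cols.mpr (hfill j hj.1 hj.2 (i₀ + 1) (by omega) (by omega))
      have hIcc_card : (Finset.Icc (1:ℤ) (2*(l:ℤ))).card = 2*l := by
        rw [Int.card_Icc]; omega
      obtain ⟨a, ha⟩ : ∃ a, C₀ \ Finset.Icc (1:ℤ) (2*(l:ℤ)) = {a} := by
        apply Finset.card_eq_one.mp
        rw [Finset.card_sdiff_of_subset hsub0, hIcc_card, hc0card]
        omega
      obtain ⟨b, hb⟩ : ∃ b, C₁ \ Finset.Icc (1:ℤ) (2*(l:ℤ)) = {b} := by
        apply Finset.card_eq_one.mp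
        rw [Finset.card_sdiff_of_subset hsub1, hIcc_card, hc1card]
        omega
      have hmem0 : ∀ j : ℤ, j ∈ C₀ ↔ ((1 ≤ j ∧ j ≤ 2*(l:ℤ)) ∨ j = a) := by
        intro j
        constructor
        · intro hj
          by_cases h : j ∈ Finset.Icc (1:ℤ) (2*(l:ℤ))
          · rw [Finset.mem_Icc] at h; exact Or.inl h
          · right
            have : j ∈ C₀ \ Finset.Icc (1:ℤ) (2*(l:ℤ)) := Finset.mem_sdiff.mpr ⟨hj, h⟩
            rw [ha, Finset.mem_singleton] at this
            exact this
        · rintro (h | rfl)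
          · exact hsub0 (Finset.mem_Icc.mpr h)
          · have : j ∈ C₀ \ Finset.Icc (1:ℤ) (2*(l:ℤ)) := by
              rw [ha]; exact Finset.mem_singleton_self j
            exact (Finset.mem_sdiff.mp this).1
      have hmem1 : ∀ j : ℤ, j ∈ C₁ ↔ ((1 ≤ j ∧ j ≤ 2*(l:ℤ)) ∨ j = b) := by
        intro j
        constructor
        · intro hj
          by_cases h : j ∈ Finset.Icc (1:ℤ) (2*(l:ℤ))
          · rw [Finset.mem_Icc] at h; exact Or.inl h
          · right
            have : j ∈ C₁ \ Finset.Icc (1:ℤ) (2*(l:ℤ)) := Finset.mem_sdiff.mpr ⟨hj, h⟩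
            rw [hb, Finset.mem_singleton] at this
            exact this
        · rintro (h | rfl)
          · exact hsub1 (Finset.mem_Icc.mpr h)
          · have : j ∈ C₁ \ Finset.Icc (1:ℤ) (2*(l:ℤ)) := by
              rw [hb]; exact Finset.mem_singleton_self j
            exact (Finset.mem_sdiff.mp this).1
      -- column sums of the two new columns
      have hcol := Hcl' ((l:ℤ) + 1) (by omega) (by omega)
      have hcolodd : ((Rows F (2*(l:ℤ) + 1)).card : ℤ) = i₀ := by
        have := card_Rows F (2*(l:ℤ) + 1)
        rw [show 2*((l:ℤ)+1) - 1 = 2*(l:ℤ) + 1 by ring] at hcol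
        omega
      have hcoleven : ((Rows F (2*(l:ℤ) + 2)).card : ℤ) = i₀ := by
        have := card_Rows F (2*(l:ℤ) + 2)
        rw [show 2*((l:ℤ)+1) = 2*(l:ℤ) + 2 by ring] at hcol
        omega
      -- each new column touches one of the two critical rows
      have hRsub : ∀ j : ℤ, 2*(l:ℤ) < j → Rows F j ⊆ Finset.Icc 1 (i₀ + 1) := by
        intro j hj i hi
        rw [mem_Rows] at hi
        have h1 := hbox _ hi
        have h2 := IH1 _ hi (by simpa using hj)
        simp only at h1 h2
        rw [Finset.mem_Icc]
        omega
      have hcols : ∀ j : ℤ, ((Rows F j).card : ℤ) = i₀ → 2*(l:ℤ) < j →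
          j ∈ C₀ ∪ C₁ := by
        intro j hcardj hj
        by_contra h
        rw [Finset.mem_union] at h
        push_neg at h
        have hsubj : Rows F j ⊆ Finset.Icc 1 (i₀ - 1) := by
          intro i hi
          have h1 := hRsub j hj hi
          rw [Finset.mem_Icc] at h1 ⊢
          have hne0 : i ≠ i₀ := by
            rintro rfl
            exact h.1 (mem_Cols.mpr (mem_Rows.mp hi))
          have hne1 : i ≠ i₀ + 1 := by
            rintro rfl
            exact h.2 (mem_Cols.mpr (mem_Rows.mp hi))
          omega
        have := Finset.card_le_card hsubj
        rw [Int.card_Icc] at this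
        omega
      have hina : (2*(l:ℤ) + 1) = a ∨ (2*(l:ℤ) + 1) = b := by
        have := hcols (2*(l:ℤ) + 1) hcolodd (by omega)
        rw [Finset.mem_union, hmem0, hmem1] at this
        omega
      have hinb : (2*(l:ℤ) + 2) = a ∨ (2*(l:ℤ) + 2) = b := by
        have := hcols (2*(l:ℤ) + 2) hcoleven (by omega)
        rw [Finset.mem_union, hmem0, hmem1] at this
        omega
      have hD : (a = 2*(l:ℤ) + 1 ∧ b = 2*(l:ℤ) + 2) ∨
          (a = 2*(l:ℤ) + 2 ∧ b = 2*(l:ℤ) + 1) := by omega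
      -- helpers describing the two columns
      have helper1 : ∀ j : ℤ, 2*(l:ℤ) < j → j ∈ C₀ → j ∉ C₁ →
          ((Rows F j).card : ℤ) = i₀ → Rows F j = Finset.Icc 1 i₀ := by
        intro j hj hin hout hcardj
        apply Finset.eq_of_subset_of_card_le
        · intro i hi
          have h1 := hRsub j hj hi
          rw [Finset.mem_Icc] at h1 ⊢
          have : i ≠ i₀ + 1 := by
            rintro rfl
            exact hout (mem_Cols.mpr (mem_Rows.mp hi))
          omega
        · rw [Int.card_Icc]; omega
      have helper2 : ∀ j : ℤ, 2*(l:ℤ) < j → j ∈ C₁ → j ∉ C₀ →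
          ((Rows F j).card : ℤ) = i₀ →
          Rows F j = Finset.Icc 1 (i₀ - 1) ∪ {i₀ + 1} := by
        intro j hj hin hout hcardj
        apply Finset.eq_of_subset_of_card_le
        · intro i hi
          have h1 := hRsub j hj hi
          rw [Finset.mem_Icc] at h1
          have : i ≠ i₀ := by
            rintro rfl
            exact hout (mem_Cols.mpr (mem_Rows.mp hi))
          simp only [Finset.mem_union, Finset.mem_Icc, Finset.mem_singleton]
          omega
        · rw [Finset.card_union_of_disjoint
            (by simp [Finset.disjoint_singleton_right, Finset.mem_Icc]),
            Int.card_Icc, Finset.card_singleton]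
          omega
      constructor
      · -- part (i) at level l+1
        intro p hp hgt
        push_cast at hgt ⊢
        have h1 := IH1 p hp (by omega)
        have hne0 : p.1 ≠ i₀ := by
          rintro he
          have : p.2 ∈ C₀ := by
            rw [hC₀, mem_Cols, ← he]
            exact hp
          rw [hmem0] at this
          omega
        have hne1 : p.1 ≠ i₀ + 1 := by
          rintro he
          have : p.2 ∈ C₁ := by
            rw [hC₁, mem_Cols, ← he]
            exact hp
          rw [hmem1] at this
          omega
        omega
      · -- part (ii) at level l+1
        intro l' h1' h2'
        push_cast at h2'
        by_cases hle : l' ≤ (l:ℤ)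
        · exact IH2 l' h1' hle
        · have hl' : l' = (l:ℤ) + 1 := by omega
          have hmema : a ∈ C₀ := by rw [hmem0]; omega
          have hmemb : b ∈ C₁ := by rw [hmem1]; omega
          rcases hD with ⟨haa, hbb⟩ | ⟨haa, hbb⟩
          · have hanotC1 : a ∉ C₁ := by
              rw [hmem1]; omega
            have hbnotC0 : b ∉ C₀ := by
              rw [hmem0]; omega
            have hRa := helper1 a (by omega) hmema hanotC1 (by rw [haa]; exact hcolodd)
            have hRb := helper2 b (by omega) hmemb hbnotC0 (by rw [hbb]; exact hcoleven)
            refine ⟨a, b, Or.inl ⟨by omega, by omega⟩, ?_, ?_⟩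
            · rw [hRa, show 2*(k:ℤ) - 2*l' + 2 = i₀ by omega]
            · rw [hRb, show 2*(k:ℤ) - 2*l' + 1 = i₀ - 1 by omega,
                show 2*(k:ℤ) - 2*l' + 3 = i₀ + 1 by omega]
          · have hanotC1 : a ∉ C₁ := by
              rw [hmem1]; omega
            have hbnotC0 : b ∉ C₀ := by
              rw [hmem0]; omega
            have hRa := helper1 a (by omega) hmema hanotC1 (by rw [haa]; exact hcoleven)
            have hRb := helper2 b (by omega) hmemb hbnotC0 (by rw [hbb]; exact hcolodd)
            refine ⟨a, b, Or.inr ⟨by omega, by omega⟩, ?_, ?_⟩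
            · rw [hRa, show 2*(k:ℤ) - 2*l' + 2 = i₀ by omega]
            · rw [hRb, show 2*(k:ℤ) - 2*l' + 1 = i₀ - 1 by omega,
                show 2*(k:ℤ) - 2*l' + 3 = i₀ + 1 by omega]
  intro l h1 h2
  exact (main k le_rfl).2 l h1 (by omega)

end Ex3


namespace Ex3

theorem boundary_exact (k : ℕ) (hk : 1 ≤ k) (F : Finset (ℤ × ℤ))
    (H : example3Image (2*k+2) (2*k) F) : horizBoundaryLen F = 3 * (2*k) := by
  rw [horizBoundaryLen_eq]
  have hmaps : ∀ p ∈ F, p.2 ∈ Finset.Icc (1:ℤ) (2*(k:ℤ)) := by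
    intro p hp
    have := (H.1 p hp).2
    rw [Finset.mem_Icc] at this ⊢
    push_cast at this
    omega
  rw [← Finset.sum_fiberwise_of_maps_to hmaps (b F)]
  rw [Finset.sum_congr rfl (fun j _ => sum_col F j)]
  rw [sum_pairs (fun j => w (Rows F j)) k]
  have hpair : ∀ l ∈ Finset.Icc (1:ℤ) (k:ℤ),
      (w (Rows F (2*l - 1)) + w (Rows F (2*l))) = 6 := by
    intro l hl
    rw [Finset.mem_Icc] at hl
    obtain ⟨a, c, hD, hRa, hRc⟩ := structure_thm k hk F H l hl.1 hl.2
    have w1 : w (Rows F a) = 2 := by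
      rw [hRa]; exact w_Icc _ (by omega)
    have w2 : w (Rows F c) = 4 := by
      rw [hRc, show 2*(k:ℤ) - 2*l + 3 = (2*(k:ℤ) - 2*l + 1) + 2 by ring]
      exact w_Icc_gap _ (by omega)
    rcases hD with ⟨ha, hc⟩ | ⟨ha, hc⟩
    · rw [← ha, ← hc]; omega
    · rw [← hc, ← ha]; omega
  rw [Finset.sum_congr rfl hpair, Finset.sum_const, Int.card_Icc, smul_eq_mul]
  omega

end Ex3

/-- Example 3: for these line sums, every reconstruction has horizontal boundary of
length at least `3n`, and this bound is attained by some reconstruction. -/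
theorem example3 (n : ℕ) (hn : 2 ≤ n) (heven : Even n) (m : ℕ) (hm : m = n + 2) :
    (∀ F : Finset (ℤ × ℤ), example3Image m n F → 3 * n ≤ horizBoundaryLen F) ∧
    (∃ F : Finset (ℤ × ℤ), example3Image m n F ∧ horizBoundaryLen F = 3 * n) := by
  obtain ⟨k, hkk⟩ := heven
  have hk : 1 ≤ k := by omega
  have hn2 : n = 2 * k := by omega
  subst hm
  subst hn2
  constructor
  · intro F H
    rw [Ex3.boundary_exact k hk F H]
  · exact ⟨Ex3.F0 k, Ex3.F0_image hk, Ex3.boundary_exact k hk _ (Ex3.F0_image hk)⟩
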